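/- Let A be an irreducible N×N matrix over ℝ ∪ {−∞} whose graph G(A) contains at least one circuit, and let λ be the maximum average circuit weight of G(A). Then for every finite initial vector x(0) ∈ ℝ^N, the sequence defined by x(k+1) = A ⊗ x(k), where (A ⊗ x)_i = max_j (A_{ij} + x_j), satisfies lim_{k→∞} x_i(k)/k = λ for every node i; that is, the asymptotic growth rate of the update times of the all-inputs (max-plus) system equals the maximal average circuit weight. -/

import Mathlib

open scoped BigOperators

/-- `IsWalkMP A l v j i` : `v` is a walk of length `l` from node `j` to node `i` in the
weighted digraph `G(A)` of a max-plus matrix `A` over `ℝ ∪ {-∞}`, where there is an edge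
from `b` to `a` whenever `A a b ≠ -∞`. -/
def IsWalkMP {N : ℕ} (A : Matrix (Fin N) (Fin N) (WithBot ℝ)) (l : ℕ)
    (v : Fin (l + 1) → Fin N) (j i : Fin N) : Prop :=
  v 0 = j ∧ v (Fin.last l) = i ∧ ∀ t : Fin l, A (v t.succ) (v t.castSucc) ≠ ⊥

/-- The weight of a walk: the sum of the weights of its edges. -/
def walkWeightMP {N : ℕ} (A : Matrix (Fin N) (Fin N) (WithBot ℝ)) (l : ℕ)
    (v : Fin (l + 1) → Fin N) : WithBot ℝ :=
  ∑ t : Fin l, A (v t.succ) (v t.castSucc)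

namespace MPAux

variable {N : ℕ} (A : Matrix (Fin N) (Fin N) (WithBot ℝ))

/-- real edge weight -/
def ew (a b : Fin N) : ℝ := (A a b).unbotD 0

/-- real weight of a (reversed) walk list -/
def wt : List (Fin N) → ℝ
  | a :: b :: t => ew A a b + wt (b :: t)
  | _ => 0

@[simp] lemma wt_nil : wt A ([] : List (Fin N)) = 0 := rfl
@[simp] lemma wt_single (a : Fin N) : wt A [a] = 0 := rfl
lemma wt_cons_cons (a b : Fin N) (t : List (Fin N)) :
    wt A (a :: b :: t) = ew A a b + wt A (b :: t) := rfl

lemma wt_append (l r : List (Fin N)) (a : Fin N) :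
    wt A (l ++ a :: r) = wt A (l ++ [a]) + wt A (a :: r) := by
  induction l with
  | nil => simp [wt]
  | cons x l ih =>
    cases l with
    | nil => simp [wt_cons_cons]
    | cons y l' =>
      simp only [List.cons_append, wt_cons_cons] at *
      rw [ih]; ring

lemma chain_glue {S : Fin N → Fin N → Prop} {l r : List (Fin N)} {a : Fin N}
    (h1 : List.IsChain S (l ++ [a])) (h2 : List.IsChain S (a :: r)) :
    List.IsChain S (l ++ a :: r) := by
  have : l ++ a :: r = (l ++ [a]) ++ r := by simp
  rw [this, List.isChain_append]
  refine ⟨h1, h2.tail, ?_⟩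
  intro u hu v hv
  simp [List.getLast?_append] at hu
  cases r with
  | nil => simp at hv
  | cons b r' =>
    simp at hv
    rw [List.isChain_cons_cons] at h2
    subst hu hv
    exact h2.1

lemma abs_wt_le {E : ℝ} (hE : ∀ a b, |ew A a b| ≤ E) :
    ∀ l : List (Fin N), |wt A l| ≤ ((l.length - 1 : ℕ) : ℝ) * E := by
  intro l
  induction l with
  | nil => simp
  | cons a t ih =>
    cases t with
    | nil => simp
    | cons b t' =>
      have hE0 : 0 ≤ E := le_trans (abs_nonneg _) (hE a b)
      simp only [wt_cons_cons, List.length_cons] at *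
      calc |ew A a b + wt A (b :: t')| ≤ |ew A a b| + |wt A (b :: t')| := abs_add_le _ _
        _ ≤ E + ((b :: t').length - 1 : ℕ) * E := add_le_add (hE a b) ih
        _ = ((t'.length + 1 + 1 - 1 : ℕ) : ℝ) * E := by
            push_cast [List.length_cons]; ring

lemma exists_dup_split {α : Type*} : ∀ (l : List α), ¬ l.Nodup →
    ∃ (a : α) (l1 l2 l3 : List α), l = l1 ++ a :: (l2 ++ a :: l3) := by
  intro l
  induction l with
  | nil => intro h; exact absurd List.nodup_nil h
  | cons b t ih =>
    intro h
    rw [List.nodup_cons] at h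
    push_neg at h
    by_cases hb : b ∈ t
    · obtain ⟨l2, l3, rfl⟩ := List.append_of_mem hb
      exact ⟨b, [], l2, l3, by simp⟩
    · obtain ⟨a, l1, l2, l3, rfl⟩ := ih (h hb)
      exact ⟨a, b :: l1, l2, l3, by simp⟩

lemma wt_eq_sum (d : Fin N) : ∀ l : List (Fin N),
    wt A l = ∑ s ∈ Finset.range (l.length - 1), ew A (l.getD s d) (l.getD (s+1) d) := by
  intro l
  induction l with
  | nil => simp
  | cons a t ih =>
    cases t with
    | nil => simp
    | cons b t' =>
      simp only [wt_cons_cons, List.length_cons, Nat.add_sub_cancel]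
      rw [Finset.sum_range_succ']
      simp only [List.getD_cons_succ, List.getD_cons_zero]
      rw [ih]
      simp only [List.length_cons, Nat.add_sub_cancel, List.getD_cons_succ]
      ring

/-- the Fin-indexed walk associated to a reversed walk list -/
def finv (k : ℕ) (l : List (Fin N)) (hl : l.length = k + 1) : Fin (k + 1) → Fin N :=
  fun t => l[(k - (t : ℕ))]'(by omega)

variable {A}

lemma coe_ew {a b : Fin N} (h : A a b ≠ ⊥) : A a b = ((ew A a b : ℝ) : WithBot ℝ) := by
  cases hv : A a b with
  | bot => exact absurd hv h
  | coe r => simp [ew, hv]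

lemma finv_zero {k : ℕ} {l : List (Fin N)} (hl : l.length = k + 1) :
    finv k l hl 0 = l.getLast (by intro h; simp [h] at hl) := by
  rw [List.getLast_eq_getElem]
  simp only [finv, Fin.val_zero, Nat.sub_zero, hl, Nat.add_sub_cancel]

lemma finv_last {k : ℕ} {l : List (Fin N)} (hl : l.length = k + 1) :
    finv k l hl (Fin.last k) = l.head (by intro h; simp [h] at hl) := by
  rw [List.head_eq_getElem]
  simp [finv]

lemma chain_iff {k : ℕ} {l : List (Fin N)} (hl : l.length = k + 1) :
    l.IsChain (fun a b => A a b ≠ ⊥) ↔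
      ∀ t : Fin k, A (finv k l hl t.succ) (finv k l hl t.castSucc) ≠ ⊥ := by
  have hidx : ∀ {i j : ℕ} (hi : i < l.length) (hj : j < l.length), i = j → l[i] = l[j] := by
    intro i j hi hj h; subst h; rfl
  rw [List.isChain_iff_getElem]
  constructor
  · intro h t
    have ht : (t : ℕ) < k := t.isLt
    have h1 : k - ((t : ℕ) + 1) + 1 < l.length := by omega
    have := h (k - ((t : ℕ) + 1)) h1
    have e1 : finv k l hl t.succ = l[k - ((t:ℕ)+1)]'(by omega) := by
      apply hidx; simp [Fin.val_succ]
    have e2 : finv k l hl t.castSucc = l[k - ((t:ℕ)+1) + 1]'(by omega) := by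
      apply hidx; simp [Fin.coe_castSucc, finv]; omega
    rw [e1, e2]; exact this
  · intro h i hi
    have hik : i < k := by omega
    have := h ⟨k - 1 - i, by omega⟩
    have e1 : finv k l hl (Fin.succ ⟨k - 1 - i, by omega⟩) = l[i]'(by omega) := by
      apply hidx; simp [finv, Fin.val_succ]; omega
    have e2 : finv k l hl (Fin.castSucc ⟨k - 1 - i, by omega⟩) = l[i+1]'(by omega) := by
      apply hidx; simp [finv, Fin.coe_castSucc]; omega
    rw [e1, e2] at this
    exact this

lemma walkWeight_eq {k : ℕ} {l : List (Fin N)} (hl : l.length = k + 1)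
    (hc : ∀ t : Fin k, A (finv k l hl t.succ) (finv k l hl t.castSucc) ≠ ⊥) :
    walkWeightMP A k (finv k l hl) = ((wt A l : ℝ) : WithBot ℝ) := by
  have hne : l ≠ [] := by intro h; simp [h] at hl
  set d : Fin N := l.head hne with hd
  have step1 : walkWeightMP A k (finv k l hl)
      = ∑ t : Fin k, ((ew A (finv k l hl t.succ) (finv k l hl t.castSucc) : ℝ) : WithBot ℝ) := by
    apply Finset.sum_congr rfl
    intro t _
    exact coe_ew (hc t)
  rw [step1]
  have step2 : ∑ t : Fin k, ((ew A (finv k l hl t.succ) (finv k l hl t.castSucc) : ℝ) : WithBot ℝ)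
      = ((∑ t : Fin k, ew A (finv k l hl t.succ) (finv k l hl t.castSucc) : ℝ) : WithBot ℝ) := by
    push_cast; rfl
  rw [step2]
  congr 1
  have hidx : ∀ {i j : ℕ} (hi : i < l.length) (hj : j < l.length), i = j → l[i] = l[j] := by
    intro i j hi hj h; subst h; rfl
  have term : ∀ t : Fin k, ew A (finv k l hl t.succ) (finv k l hl t.castSucc)
      = ew A (l.getD (k - ((t:ℕ)+1)) d) (l.getD (k - (t:ℕ)) d) := by
    intro t
    have ht : (t : ℕ) < k := t.isLt
    rw [List.getD_eq_getElem l d (by omega), List.getD_eq_getElem l d (by omega)]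
    exact congrArg₂ (ew A) (hidx _ _ (by simp [Fin.val_succ])) (hidx _ _ (by simp))
  rw [Finset.sum_congr rfl (fun t _ => term t)]
  rw [Fin.sum_univ_eq_sum_range (fun j => ew A (l.getD (k - (j+1)) d) (l.getD (k - j) d)) k]
  rw [← Finset.sum_range_reflect]
  rw [wt_eq_sum A d l, hl]
  simp only [Nat.add_sub_cancel]
  apply Finset.sum_congr rfl
  intro s hs
  rw [Finset.mem_range] at hs
  have e1 : k - (k - 1 - s + 1) = s := by omega
  have e2 : k - (k - 1 - s) = s + 1 := by omega
  rw [e1, e2]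

lemma finv_ofFn_reverse {k : ℕ} (v : Fin (k + 1) → Fin N)
    (hl : ((List.ofFn v).reverse).length = k + 1) :
    finv k ((List.ofFn v).reverse) hl = v := by
  funext t
  have ht : (t : ℕ) ≤ k := by omega
  show ((List.ofFn v).reverse)[(k - (t:ℕ))]'(by omega) = v t
  rw [List.getElem_reverse]
  rw [List.getElem_ofFn]
  congr 1
  ext
  simp only [List.length_ofFn] at *
  omega

variable {lam : ℝ}

lemma hub_list
    (hub : ∀ (m : ℕ) (i : Fin N) (c : Fin (m + 1) → Fin N), 1 ≤ m → IsWalkMP A m c i i →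
      walkWeightMP A m c ≤ (((m : ℝ) * lam : ℝ) : WithBot ℝ))
    (l : List (Fin N)) (hc : l.IsChain (fun a b => A a b ≠ ⊥)) (h2 : 2 ≤ l.length)
    (hne : l ≠ []) (hcyc : l.head hne = l.getLast hne) :
    wt A l ≤ ((l.length : ℝ) - 1) * lam := by
  obtain ⟨m, hm⟩ : ∃ m, l.length = m + 1 := ⟨l.length - 1, by omega⟩
  have hm1 : 1 ≤ m := by omega
  have hedges := (chain_iff hm).mp hc
  have hwalk : IsWalkMP A m (finv m l hm) (l.getLast hne) (l.getLast hne) := by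
    refine ⟨finv_zero hm, ?_, hedges⟩
    rw [finv_last hm]; exact hcyc
  have hb := hub m (l.getLast hne) (finv m l hm) hm1 hwalk
  rw [walkWeight_eq hm hedges, WithBot.coe_le_coe] at hb
  have hml : ((l.length : ℝ)) = (m:ℝ) + 1 := by rw [hm]; push_cast; ring
  rw [hml]
  linarith

lemma wt_upper
    (hubl : ∀ (l : List (Fin N)), l.IsChain (fun a b => A a b ≠ ⊥) → 2 ≤ l.length →
      ∀ hne : l ≠ [], l.head hne = l.getLast hne → wt A l ≤ ((l.length : ℝ) - 1) * lam)
    {E : ℝ} (hE : ∀ a b, |ew A a b| ≤ E) :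
    ∀ (n : ℕ) (l : List (Fin N)), l.length ≤ n → l.IsChain (fun a b => A a b ≠ ⊥) → l ≠ [] →
      wt A l ≤ ((l.length : ℝ) - 1) * lam + (N : ℝ) * (E + |lam|) := by
  intro n
  induction n with
  | zero =>
    intro l hl _ hne
    exact absurd (List.length_eq_zero_iff.mp (by omega)) hne
  | succ n ih =>
    intro l hl hc hne
    by_cases hlen : l.length ≤ N
    · have h1 : 1 ≤ l.length := List.length_pos_iff.mpr hne
      have habs := abs_wt_le A hE l
      have hE0 : 0 ≤ E := le_trans (abs_nonneg _) (hE (l.head hne) (l.head hne))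
      have hcast : ((l.length - 1 : ℕ) : ℝ) = (l.length : ℝ) - 1 := by
        rw [Nat.cast_sub h1]; simp
      rw [hcast] at habs
      have hwle : wt A l ≤ ((l.length:ℝ) - 1) * E := (abs_le.mp habs).2
      have hlN : (l.length : ℝ) ≤ (N:ℝ) := by exact_mod_cast hlen
      have h1' : (1:ℝ) ≤ (l.length:ℝ) := by exact_mod_cast h1
      nlinarith [abs_nonneg lam, neg_abs_le lam, le_abs_self lam]
    · push_neg at hlen
      have hnodup : ¬ l.Nodup := by
        intro hd
        have := hd.length_le_card
        rw [Fintype.card_fin] at this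
        omega
      obtain ⟨a, l1, l2, l3, rfl⟩ := exists_dup_split _ hnodup
      -- the circuit
      have hcirc_infix : ((a :: l2) ++ [a]) <:+: (l1 ++ a :: (l2 ++ a :: l3)) :=
        ⟨l1, l3, by simp⟩
      have hccw : ((a :: l2) ++ [a]).IsChain (fun a b => A a b ≠ ⊥) := hc.infix hcirc_infix
      have hcwne : ((a :: l2) ++ [a]) ≠ [] := by simp
      have hcwhead : ((a :: l2) ++ [a]).head hcwne = a := by
        rw [List.head_eq_getElem]
        simp
      have hcwlast : ((a :: l2) ++ [a]).getLast hcwne = a := by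
        simp [List.getLast_append]
      have hcwlen : ((a :: l2) ++ [a]).length = l2.length + 2 := by simp
      have hcwwt : wt A ((a :: l2) ++ [a]) ≤ ((l2.length : ℝ) + 1) * lam := by
        have := hubl _ hccw (by rw [hcwlen]; omega) hcwne (by rw [hcwhead, hcwlast])
        rw [hcwlen] at this
        push_cast at this
        convert this using 2
        ring
      -- the shortened walk
      have hc1 : (l1 ++ [a]).IsChain (fun a b => A a b ≠ ⊥) :=
        hc.infix ⟨[], l2 ++ a :: l3, by simp⟩
      have hc2 : (a :: l3).IsChain (fun a b => A a b ≠ ⊥) :=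
        hc.infix ⟨l1 ++ a :: l2, [], by simp⟩
      have hcl' : (l1 ++ a :: l3).IsChain (fun a b => A a b ≠ ⊥) := chain_glue hc1 hc2
      have hl'len : (l1 ++ a :: l3).length ≤ n := by
        simp only [List.length_append, List.length_cons] at hl ⊢
        omega
      have hihl' := ih (l1 ++ a :: l3) hl'len hcl' (by simp)
      -- weights
      have w1 : wt A (l1 ++ a :: (l2 ++ a :: l3))
          = wt A (l1 ++ [a]) + wt A (a :: (l2 ++ a :: l3)) := wt_append A l1 (l2 ++ a :: l3) a
      have w2 : wt A (a :: (l2 ++ a :: l3))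
          = wt A ((a :: l2) ++ [a]) + wt A (a :: l3) := by
        have := wt_append A (a :: l2) l3 a
        simpa using this
      have w3 : wt A (l1 ++ a :: l3) = wt A (l1 ++ [a]) + wt A (a :: l3) := wt_append A l1 l3 a
      have hlenodd : ((l1 ++ a :: (l2 ++ a :: l3)).length : ℝ)
          = ((l1 ++ a :: l3).length : ℝ) + ((l2.length : ℝ) + 1) := by
        simp only [List.length_append, List.length_cons]
        push_cast
        ring
      rw [w1, w2]
      rw [hlenodd]
      linarith [hihl', hcwwt, w3]

lemma glue_walk {l r : List (Fin N)} (hl : l ≠ []) (hr : r ≠ [])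
    (hc1 : l.IsChain (fun a b => A a b ≠ ⊥)) (hc2 : r.IsChain (fun a b => A a b ≠ ⊥))
    (hj : l.getLast hl = r.head hr) :
    (l.dropLast ++ r).IsChain (fun a b => A a b ≠ ⊥)
    ∧ wt A (l.dropLast ++ r) = wt A l + wt A r
    ∧ (l.dropLast ++ r).length = l.length - 1 + r.length
    ∧ (l.dropLast ++ r).head? = some (l.head hl) := by
  have hrc : r.head hr :: r.tail = r := List.cons_head_tail hr
  have hld : l.dropLast ++ [l.getLast hl] = l := List.dropLast_append_getLast hl
  refine ⟨?_, ?_, ?_, ?_⟩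
  · have h1 : (l.dropLast ++ [l.getLast hl]).IsChain (fun a b => A a b ≠ ⊥) := by
      rw [hld]; exact hc1
    have h2 : (l.getLast hl :: r.tail).IsChain (fun a b => A a b ≠ ⊥) := by
      rw [hj, hrc]; exact hc2
    have := chain_glue h1 h2
    rwa [hj, hrc] at this
  · calc wt A (l.dropLast ++ r) = wt A (l.dropLast ++ r.head hr :: r.tail) := by rw [hrc]
      _ = wt A (l.dropLast ++ [r.head hr]) + wt A (r.head hr :: r.tail) :=
          wt_append A l.dropLast r.tail (r.head hr)
      _ = wt A l + wt A r := by rw [hrc, ← hj, hld]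
  · simp
  · rw [List.head?_append, List.head?_eq_head hr, ← hj]
    have h2 : l.head? = (l.dropLast.head?).or (some (l.getLast hl)) := by
      conv_lhs => rw [← hld]
      rw [List.head?_append]
      rfl
    rw [← h2, List.head?_eq_head hl]


lemma x_lower (x0 : Fin N → ℝ) (x : ℕ → Fin N → WithBot ℝ)
    (hx0 : ∀ i : Fin N, x 0 i = ((x0 i : ℝ) : WithBot ℝ))
    (hrec : ∀ (k : ℕ) (i : Fin N), x (k + 1) i = Finset.univ.sup fun j => A i j + x k j) :
    ∀ (k : ℕ) (l : List (Fin N)) (hne : l ≠ []), l.IsChain (fun a b => A a b ≠ ⊥) →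
      l.length = k + 1 → ∀ i : Fin N, l.head hne = i →
      ((x0 (l.getLast hne) + wt A l : ℝ) : WithBot ℝ) ≤ x k i := by
  intro k
  induction k with
  | zero =>
    intro l hne hc hl i hh
    match l, hne, hl, hh with
    | [b], hne, hl, hh =>
      have hb : b = i := hh
      subst hb
      simp only [List.getLast_singleton, wt_single, add_zero]
      rw [hx0]
  | succ k ih =>
    intro l hne hc hl i hh
    match l, hne, hl, hh with
    | a :: b :: t, hne, hl, hh =>
      have hab : A a b ≠ ⊥ := (List.isChain_cons_cons.mp hc).1
      have hct : (b :: t).IsChain (fun a b => A a b ≠ ⊥) := (List.isChain_cons_cons.mp hc).2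
      have hlt : (b :: t).length = k + 1 := by
        simpa using hl
      have hib := ih (b :: t) (by simp) hct hlt b rfl
      have hstep : A i b + x k b ≤ x (k + 1) i := by
        rw [hrec]
        exact Finset.le_sup (f := fun j => A i j + x k j) (Finset.mem_univ b)
      have hai : a = i := hh
      subst hai
      calc ((x0 ((a :: b :: t).getLast hne) + wt A (a :: b :: t) : ℝ) : WithBot ℝ)
          = ((ew A a b : ℝ) : WithBot ℝ)
            + ((x0 ((b :: t).getLast (by simp)) + wt A (b :: t) : ℝ) : WithBot ℝ) := by
            rw [← WithBot.coe_add]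
            rw [WithBot.coe_inj]
            rw [wt_cons_cons, List.getLast_cons (by simp : (b :: t) ≠ [])]
            ring
        _ ≤ A a b + x k b := by
            rw [(coe_ew hab : A a b = _)]
            exact add_le_add le_rfl hib
        _ ≤ x (k + 1) a := hstep

lemma x_upper_walk (hN : 0 < N) (x0 : Fin N → ℝ) (x : ℕ → Fin N → WithBot ℝ)
    (hx0 : ∀ i : Fin N, x 0 i = ((x0 i : ℝ) : WithBot ℝ))
    (hrec : ∀ (k : ℕ) (i : Fin N), x (k + 1) i = Finset.univ.sup fun j => A i j + x k j) :
    ∀ (k : ℕ) (i : Fin N), x k i ≠ ⊥ → ∃ (l : List (Fin N)) (hne : l ≠ []),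
      l.IsChain (fun a b => A a b ≠ ⊥) ∧ l.length = k + 1 ∧ l.head hne = i ∧
      x k i ≤ ((x0 (l.getLast hne) + wt A l : ℝ) : WithBot ℝ) := by
  intro k
  induction k with
  | zero =>
    intro i _
    refine ⟨[i], by simp, List.isChain_singleton i, rfl, rfl, ?_⟩
    rw [hx0]
    simp
  | succ k ih =>
    intro i hnb
    obtain ⟨j, -, hjs⟩ := Finset.exists_mem_eq_sup (Finset.univ : Finset (Fin N))
      ⟨⟨0, hN⟩, Finset.mem_univ _⟩ (fun j => A i j + x k j)
    have hxk : x (k + 1) i = A i j + x k j := by rw [hrec]; exact hjs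
    have hnbj : A i j ≠ ⊥ ∧ x k j ≠ ⊥ := by
      rw [hxk] at hnb
      constructor <;> intro hb <;> apply hnb <;> rw [WithBot.add_eq_bot]
      · exact Or.inl hb
      · exact Or.inr hb
    obtain ⟨l, hne, hcl, hll, hhl, hxl⟩ := ih j hnbj.2
    match l, hne, hcl, hll, hhl, hxl with
    | b :: t, hne, hcl, hll, hhl, hxl =>
      have hbj : b = j := hhl
      subst hbj
      refine ⟨i :: b :: t, by simp, ?_, by simpa using hll, rfl, ?_⟩
      · exact List.isChain_cons_cons.mpr ⟨hnbj.1, hcl⟩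
      · rw [hxk]
        calc A i b + x k b
            ≤ ((ew A i b : ℝ) : WithBot ℝ)
              + ((x0 ((b :: t).getLast hne) + wt A (b :: t) : ℝ) : WithBot ℝ) := by
              rw [(coe_ew hnbj.1 : A i b = _)]
              exact add_le_add le_rfl hxl
          _ = ((x0 ((i :: b :: t).getLast (by simp)) + wt A (i :: b :: t) : ℝ) : WithBot ℝ) := by
              rw [← WithBot.coe_add, WithBot.coe_inj,
                List.getLast_cons (by simp : (b :: t) ≠ []), wt_cons_cons]
              ring

end MPAux

/-- for an irreducible max-plus matrix `A` over `ℝ ∪ {-∞}` whose graph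
contains at least one circuit, with maximum average circuit weight `lam`, the all-inputs
system `x(k+1) = A ⊗ x(k)`, `(A ⊗ x)_i = max_j (A i j + x j)`, started from any finite
vector, has asymptotic growth rate `lam` at every node: `x_i(k)/k → lam`. -/
theorem maxplus_growth_rate_eq_max_avg_circuit_weight {N : ℕ}
    (A : Matrix (Fin N) (Fin N) (WithBot ℝ))
    (hirr : ∀ i j : Fin N, ∃ (l : ℕ) (p : Fin (l + 1) → Fin N), IsWalkMP A l p i j)
    (hcirc : ∃ (m : ℕ) (i : Fin N) (c : Fin (m + 1) → Fin N), 1 ≤ m ∧ IsWalkMP A m c i i)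
    (lam : ℝ)
    (hub : ∀ (m : ℕ) (i : Fin N) (c : Fin (m + 1) → Fin N), 1 ≤ m → IsWalkMP A m c i i →
      walkWeightMP A m c ≤ (((m : ℝ) * lam : ℝ) : WithBot ℝ))
    (hmax : ∃ (m : ℕ) (i : Fin N) (c : Fin (m + 1) → Fin N), 1 ≤ m ∧ IsWalkMP A m c i i ∧
      walkWeightMP A m c = (((m : ℝ) * lam : ℝ) : WithBot ℝ))
    (x0 : Fin N → ℝ) (x : ℕ → Fin N → WithBot ℝ)
    (hx0 : ∀ i : Fin N, x 0 i = ((x0 i : ℝ) : WithBot ℝ))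
    (hrec : ∀ (k : ℕ) (i : Fin N), x (k + 1) i = Finset.univ.sup fun j => A i j + x k j) :
    ∀ i : Fin N, ∃ r : ℕ → ℝ, (∀ k : ℕ, x k i = ((r k : ℝ) : WithBot ℝ)) ∧
      Filter.Tendsto (fun k : ℕ => r k / (k : ℝ)) Filter.atTop (nhds lam) := by
  intro i
  classical
  obtain ⟨m, istar, c, hm1, hcwalk, hcweq⟩ := hmax
  -- circuit as a (reversed) list
  have hlc_len : ((List.ofFn c).reverse).length = m + 1 := by simp
  have hfvc := MPAux.finv_ofFn_reverse c hlc_len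
  have hlc_edges : ∀ t : Fin m,
      A (MPAux.finv m ((List.ofFn c).reverse) hlc_len t.succ)
        (MPAux.finv m ((List.ofFn c).reverse) hlc_len t.castSucc) ≠ ⊥ := by
    rw [hfvc]; exact hcwalk.2.2
  have hlc_chain : ((List.ofFn c).reverse).IsChain (fun a b => A a b ≠ ⊥) :=
    (MPAux.chain_iff hlc_len).mpr hlc_edges
  have hlc_ne : ((List.ofFn c).reverse) ≠ [] := by
    intro h; rw [h] at hlc_len; simp at hlc_len
  have hlc_wt : MPAux.wt A ((List.ofFn c).reverse) = (m : ℝ) * lam := by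
    have h := MPAux.walkWeight_eq hlc_len hlc_edges
    rw [hfvc, hcweq] at h
    exact (WithBot.coe_inj.mp h).symm
  have hlc_head : ((List.ofFn c).reverse).head hlc_ne = istar := by
    have h := MPAux.finv_last hlc_len
    rw [hfvc] at h
    exact h.symm.trans hcwalk.2.1
  have hlc_last : ((List.ofFn c).reverse).getLast hlc_ne = istar := by
    have h := MPAux.finv_zero hlc_len
    rw [hfvc] at h
    exact h.symm.trans hcwalk.1
  -- path from istar to i as a (reversed) list
  obtain ⟨p0, p, hpwalk⟩ := hirr istar i
  have hlp_len : ((List.ofFn p).reverse).length = p0 + 1 := by simp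
  have hfvp := MPAux.finv_ofFn_reverse p hlp_len
  have hlp_edges : ∀ t : Fin p0,
      A (MPAux.finv p0 ((List.ofFn p).reverse) hlp_len t.succ)
        (MPAux.finv p0 ((List.ofFn p).reverse) hlp_len t.castSucc) ≠ ⊥ := by
    rw [hfvp]; exact hpwalk.2.2
  have hlp_chain : ((List.ofFn p).reverse).IsChain (fun a b => A a b ≠ ⊥) :=
    (MPAux.chain_iff hlp_len).mpr hlp_edges
  have hlp_ne : ((List.ofFn p).reverse) ≠ [] := by
    intro h; rw [h] at hlp_len; simp at hlp_len
  have hlp_head : ((List.ofFn p).reverse).head hlp_ne = i := by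
    have h := MPAux.finv_last hlp_len
    rw [hfvp] at h
    exact h.symm.trans hpwalk.2.1
  have hlp_last : ((List.ofFn p).reverse).getLast hlp_ne = istar := by
    have h := MPAux.finv_zero hlp_len
    rw [hfvp] at h
    exact h.symm.trans hpwalk.1
  -- constants
  have hNpos : 0 < N := istar.pos
  have hprodne : (Finset.univ : Finset (Fin N × Fin N)).Nonempty :=
    ⟨(istar, istar), Finset.mem_univ _⟩
  have hNe : (Finset.univ : Finset (Fin N)).Nonempty := ⟨istar, Finset.mem_univ _⟩
  set E : ℝ := Finset.univ.sup' hprodne (fun ab : Fin N × Fin N => |MPAux.ew A ab.1 ab.2|)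
    with hEdef
  have hE : ∀ a b : Fin N, |MPAux.ew A a b| ≤ E := fun a b => by
    rw [hEdef]
    exact Finset.le_sup' (fun ab : Fin N × Fin N => |MPAux.ew A ab.1 ab.2|)
      (Finset.mem_univ (a, b))
  have hE0 : 0 ≤ E := le_trans (abs_nonneg _) (hE istar istar)
  set X0max : ℝ := Finset.univ.sup' hNe x0 with hXmaxdef
  set X0min : ℝ := Finset.univ.inf' hNe x0 with hXmindef
  have hXmax : ∀ j, x0 j ≤ X0max := fun j => by
    rw [hXmaxdef]; exact Finset.le_sup' x0 (Finset.mem_univ j)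
  have hXmin : ∀ j, X0min ≤ x0 j := fun j => by
    rw [hXmindef]; exact Finset.inf'_le x0 (Finset.mem_univ j)
  have hubl := MPAux.hub_list hub
  have hupper := MPAux.wt_upper hubl hE
  -- every node has an incoming edge
  have hin : ∀ i' : Fin N, ∃ j, A i' j ≠ ⊥ := by
    intro i'
    obtain ⟨l, q, hq⟩ := hirr istar i'
    cases l with
    | zero =>
      have h00 : (Fin.last 0 : Fin 1) = 0 := rfl
      have hii : istar = i' := by rw [← hq.1, ← hq.2.1, h00]
      refine ⟨c (Fin.castSucc ⟨m - 1, by omega⟩), ?_⟩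
      have h := hcwalk.2.2 ⟨m - 1, by omega⟩
      have hsucc : (⟨m - 1, by omega⟩ : Fin m).succ = Fin.last m := by
        ext; simp only [Fin.val_succ, Fin.val_last]; omega
      rw [hsucc, hcwalk.2.1] at h
      rw [← hii]
      exact h
    | succ l' =>
      refine ⟨q (Fin.castSucc ⟨l', by omega⟩), ?_⟩
      have h := hq.2.2 ⟨l', by omega⟩
      have hsucc : (⟨l', by omega⟩ : Fin (l' + 1)).succ = Fin.last (l' + 1) := by
        ext; simp only [Fin.val_succ, Fin.val_last]
      rw [hsucc, hq.2.1] at h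
      exact h
  -- finiteness
  have hnb : ∀ (k : ℕ) (i' : Fin N), x k i' ≠ ⊥ := by
    intro k
    induction k with
    | zero => intro i'; rw [hx0]; exact WithBot.coe_ne_bot
    | succ k ihk =>
      intro i'
      obtain ⟨j, hj⟩ := hin i'
      have hterm : A i' j + x k j ≠ ⊥ := by
        rw [Ne, WithBot.add_eq_bot]
        push_neg
        exact ⟨hj, ihk j⟩
      rw [hrec]
      intro hsup
      exact hterm (le_bot_iff.mp
        (hsup ▸ Finset.le_sup (f := fun j => A i' j + x k j) (Finset.mem_univ j)))
  have hxr : ∀ k : ℕ, x k i = (((x k i).unbotD 0 : ℝ) : WithBot ℝ) := by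
    intro k
    cases hv : x k i with
    | bot => exact absurd hv (hnb k i)
    | coe v => simp
  -- upper bound on the trajectory
  have hup : ∀ k : ℕ, (x k i).unbotD 0 ≤ (k : ℝ) * lam + (X0max + (N : ℝ) * (E + |lam|)) := by
    intro k
    obtain ⟨l, hne, hcl, hll, hhl, hxle⟩ :=
      MPAux.x_upper_walk hNpos x0 x hx0 hrec k i (hnb k i)
    have hw := hupper (k + 1) l (le_of_eq hll) hcl hne
    rw [hll] at hw
    push_cast at hw
    rw [hxr k, WithBot.coe_le_coe] at hxle
    have hxb := hXmax (l.getLast hne)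
    linarith [hxle, hw, hxb]
  -- repeated circuit walks
  have hrep : ∀ s : ℕ, s < m → ∀ q : ℕ, ∃ L : List (Fin N),
      L.IsChain (fun a b => A a b ≠ ⊥) ∧ L.length = q * m + s + 1 ∧
      L.head? = some istar ∧
      MPAux.wt A L = (q : ℝ) * ((m : ℝ) * lam)
        + MPAux.wt A (((List.ofFn c).reverse).take (s + 1)) := by
    intro s hs q
    induction q with
    | zero =>
      refine ⟨((List.ofFn c).reverse).take (s + 1), hlc_chain.take _, ?_, ?_, by simp⟩
      · rw [List.length_take, hlc_len]
        omega
      · conv_lhs => rw [← List.cons_head_tail hlc_ne]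
        rw [List.take_succ_cons, List.head?_cons, hlc_head]
    | succ q ihq =>
      obtain ⟨L, hLc, hLl, hLh, hLw⟩ := ihq
      have hLne : L ≠ [] := by intro h; rw [h] at hLh; simp at hLh
      have hLhead : L.head hLne = istar := by
        rw [List.head?_eq_head hLne] at hLh
        exact Option.some.inj hLh
      have hg := MPAux.glue_walk hlc_ne hLne hlc_chain hLc (by rw [hlc_last, hLhead])
      refine ⟨((List.ofFn c).reverse).dropLast ++ L, hg.1, ?_, ?_, ?_⟩
      · rw [hg.2.2.1, hlc_len, hLl]
        have hsm : (q + 1) * m = q * m + m := Nat.succ_mul q m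
        rw [hsm]
        generalize q * m = t
        omega
      · rw [hg.2.2.2, hlc_head]
      · rw [hg.2.1, hLw, hlc_wt]
        push_cast
        ring
  -- lower bound on the trajectory
  set D : ℝ := ((p0 : ℝ) + (m : ℝ)) * |lam| + (m : ℝ) * E
      - MPAux.wt A ((List.ofFn p).reverse) - X0min with hDdef
  have hlow : ∀ k : ℕ, p0 ≤ k → (k : ℝ) * lam - D ≤ (x k i).unbotD 0 := by
    intro k hk
    obtain ⟨s, q, hs, hqs⟩ : ∃ s q, s < m ∧ q * m + s = k - p0 :=
      ⟨(k - p0) % m, (k - p0) / m, Nat.mod_lt _ (by omega),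
        by rw [mul_comm]; exact Nat.div_add_mod _ _⟩
    obtain ⟨L, hLc, hLl, hLh, hLw⟩ := hrep s hs q
    have hLne : L ≠ [] := by intro h; rw [h] at hLh; simp at hLh
    have hLhead : L.head hLne = istar := by
      rw [List.head?_eq_head hLne] at hLh
      exact Option.some.inj hLh
    have hg := MPAux.glue_walk hlp_ne hLne hlp_chain hLc (by rw [hlp_last, hLhead])
    have hcastqm : (q : ℝ) * (m : ℝ) = (k : ℝ) - (p0 : ℝ) - (s : ℝ) := by
      have h1 := congrArg (Nat.cast : ℕ → ℝ) hqs
      push_cast [Nat.cast_sub hk] at h1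
      linarith
    have hWlen : ((((List.ofFn p).reverse).dropLast ++ L)).length = k + 1 := by
      rw [hg.2.2.1, hlp_len, hLl]
      have h1 : q * m + s + p0 = k := by
        have h2 := hqs
        have h3 : p0 ≤ k := hk
        omega
      generalize hqm : q * m = t at h1 ⊢
      omega
    have hWne : (((List.ofFn p).reverse).dropLast ++ L) ≠ [] := by
      intro h
      rw [h] at hWlen
      simp at hWlen
    have hWhead : (((List.ofFn p).reverse).dropLast ++ L).head hWne = i := by
      have h := hg.2.2.2
      rw [List.head?_eq_head hWne, hlp_head] at h
      exact Option.some.inj h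
    have hxge := MPAux.x_lower x0 x hx0 hrec k _ hWne hg.1 hWlen i hWhead
    rw [hxr k, WithBot.coe_le_coe] at hxge
    have hwtW := hg.2.1
    have hbase : |MPAux.wt A (((List.ofFn c).reverse).take (s + 1))| ≤ (s : ℝ) * E := by
      have h := MPAux.abs_wt_le A hE (((List.ofFn c).reverse).take (s + 1))
      have hlt : (((List.ofFn c).reverse).take (s + 1)).length = s + 1 := by
        rw [List.length_take, hlc_len]
        omega
      rw [hlt] at h
      simpa using h
    have habs2 := (abs_le.mp hbase).1
    have hXm := hXmin ((((List.ofFn p).reverse).dropLast ++ L).getLast hWne)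
    have h1 : ((p0 : ℝ) + (s : ℝ)) * lam ≤ ((p0 : ℝ) + (s : ℝ)) * |lam| :=
      mul_le_mul_of_nonneg_left (le_abs_self lam) (by positivity)
    have h2 : ((p0 : ℝ) + (s : ℝ)) * |lam| ≤ ((p0 : ℝ) + (m : ℝ)) * |lam| := by
      apply mul_le_mul_of_nonneg_right _ (abs_nonneg lam)
      have hsm : (s : ℝ) ≤ (m : ℝ) := by exact_mod_cast hs.le
      linarith
    have h3 : (s : ℝ) * E ≤ (m : ℝ) * E :=
      mul_le_mul_of_nonneg_right (by exact_mod_cast hs.le) hE0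
    have hql : (q : ℝ) * ((m : ℝ) * lam) = ((k : ℝ) - (p0 : ℝ) - (s : ℝ)) * lam := by
      rw [← hcastqm]; ring
    have hexp : ((k : ℝ) - (p0 : ℝ) - (s : ℝ)) * lam
        = (k : ℝ) * lam - ((p0 : ℝ) + (s : ℝ)) * lam := by ring
    linarith [hxge, hwtW, hLw, hql, hexp, h1, h2, h3, habs2, hXm, hDdef.le, hDdef.ge]
  -- conclusion
  refine ⟨fun k => (x k i).unbotD 0, hxr, ?_⟩
  have htend1 : Filter.Tendsto (fun k : ℕ => lam - D / (k : ℝ))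
      Filter.atTop (nhds lam) := by
    have h0 := tendsto_const_div_atTop_nhds_zero_nat D
    have h := Filter.Tendsto.sub
      (tendsto_const_nhds : Filter.Tendsto (fun _ : ℕ => lam) Filter.atTop (nhds lam)) h0
    simpa using h
  have htend2 : Filter.Tendsto
      (fun k : ℕ => lam + (X0max + (N : ℝ) * (E + |lam|)) / (k : ℝ))
      Filter.atTop (nhds lam) := by
    have h0 := tendsto_const_div_atTop_nhds_zero_nat (X0max + (N : ℝ) * (E + |lam|))
    have h := Filter.Tendsto.add
      (tendsto_const_nhds : Filter.Tendsto (fun _ : ℕ => lam) Filter.atTop (nhds lam)) h0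
    simpa using h
  apply tendsto_of_tendsto_of_tendsto_of_le_of_le' htend1 htend2
  · filter_upwards [Filter.eventually_ge_atTop (max p0 1)] with k hk
    have hk1 : 1 ≤ k := le_trans (le_max_right _ _) hk
    have hkp : p0 ≤ k := le_trans (le_max_left _ _) hk
    have hkpos : (0 : ℝ) < (k : ℝ) := by exact_mod_cast hk1
    have hl := hlow k hkp
    have heq : ((k : ℝ) * lam - D) / (k : ℝ) = lam - D / (k : ℝ) := by
      field_simp
    rw [← heq]
    gcongr
  · filter_upwards [Filter.eventually_ge_atTop (max p0 1)] with k hk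
    have hk1 : 1 ≤ k := le_trans (le_max_right _ _) hk
    have hkpos : (0 : ℝ) < (k : ℝ) := by exact_mod_cast hk1
    have hu := hup k
    have heq : ((k : ℝ) * lam + (X0max + (N : ℝ) * (E + |lam|))) / (k : ℝ)
        = lam + (X0max + (N : ℝ) * (E + |lam|)) / (k : ℝ) := by
      field_simp
    rw [← heq]
    gcongr
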